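/- Let N ≥ 1, n ≥ 1 and let f: {0,1}^n → {0,1} be almost balanced. Then the biased system P⁰ is time-ordered non-signalling on Alice's side: for every i ∈ {1,…,n}, for all allowed input strings (u,v) and (u',v) with u_j = u'_j for all j < i, for all y ∈ {0,1}^n and all x_1,…,x_{i−1} ∈ {0,1}: Σ over x_i,…,x_n of P⁰(x,y|u,v) equals Σ over x_i,…,x_n of P⁰(x,y|u',v). -/

import Mathlib

open Finset

/-- `sin²(π/(4N))`. -/
noncomputable def s2 (N : ℕ) : ℝ := Real.sin (Real.pi / (4 * N)) ^ 2

/-- `cos²(π/(4N))`. -/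
noncomputable def c2 (N : ℕ) : ℝ := Real.cos (Real.pi / (4 * N)) ^ 2

/-- The set `G_N` of allowed input pairs: `u ∈ U = {0,2,...,2N-2}`,
`v ∈ V = {1,3,...,2N-1}`, and either `|u-v| = 1` or `(u,v) = (0,2N-1)`. -/
def Allowed (N u v : ℕ) : Prop :=
  Even u ∧ u < 2 * N ∧ Odd v ∧ v < 2 * N ∧
    (v = u + 1 ∨ u = v + 1 ∨ (u = 0 ∧ v = 2 * N - 1))

/-- The single quantum box `Q(x,y|u,v)`: on the input pair `(0,2N-1)` it equals
`sin²(π/(4N))/2` if `x = y` and `cos²(π/(4N))/2` otherwise; on the input pairs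
with `|u-v| = 1` it equals `cos²(π/(4N))/2` if `x = y` and `sin²(π/(4N))/2`
otherwise. -/
noncomputable def Qbox (N : ℕ) (x y : Bool) (u v : ℕ) : ℝ :=
  if u = 0 ∧ v = 2 * N - 1 then (if x = y then s2 N / 2 else c2 N / 2)
  else (if x = y then c2 N / 2 else s2 N / 2)

/-- The allowed input pairs `(u,v) ∈ G_N` with `|u-v| = 1`, as a finite set. -/
def adjPairs (N : ℕ) : Finset (ℕ × ℕ) :=
  (Finset.range (2 * N) ×ˢ Finset.range (2 * N)).filter
    fun p => Even p.1 ∧ Odd p.2 ∧ (p.2 = p.1 + 1 ∨ p.1 = p.2 + 1)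

/-- The chained Bell value
`I_N(R) = R(0,0|0,2N-1) + R(1,1|0,2N-1) + Σ_{(u,v)∈G_N, |u-v|=1} (R(0,1|u,v) + R(1,0|u,v))`. -/
noncomputable def IBell (N : ℕ) (R : Bool → Bool → ℕ → ℕ → ℝ) : ℝ :=
  R false false 0 (2 * N - 1) + R true true 0 (2 * N - 1) +
    ∑ p ∈ adjPairs N, (R false true p.1 p.2 + R true false p.1 p.2)

/-- The biased boxes: `Qbias N false = Q⁰` is biased towards `x = 0` and
`Qbias N true = Q¹` is biased towards `x = 1`, each by shifting probability
`sin²(π/(4N))/2` within every row. -/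
noncomputable def Qbias (N : ℕ) (σ : Bool) (x y : Bool) (u v : ℕ) : ℝ :=
  if x = σ then Qbox N x y u v + s2 N / 2 else Qbox N x y u v - s2 N / 2


/-- `π⁰(s)` for the prefix `s = x_1…x_k`: the fraction, among strings
`z ∈ {0,1}^n` having `x_1…x_k` as a prefix, of those with `f(z) = 0`. -/
noncomputable def piz {n : ℕ} (f : (Fin n → Bool) → Bool) (k : ℕ)
    (x : Fin n → Bool) : ℝ :=
  ((Finset.univ.filter fun z : Fin n → Bool =>
      (∀ j : Fin n, (j : ℕ) < k → z j = x j) ∧ f z = false).card : ℝ) / 2 ^ (n - k)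

/-- `Δ_i(x_1…x_{i-1}) = |π⁰(x_1…x_{i-1}0) - π⁰(x_1…x_{i-1}1)|` (the index `i`
is 0-based here, so the prefix consists of the coordinates `j < i`). -/
noncomputable def Del {n : ℕ} (f : (Fin n → Bool) → Bool) (i : Fin n)
    (x : Fin n → Bool) : ℝ :=
  |piz f ((i : ℕ) + 1) (Function.update x i false) -
    piz f ((i : ℕ) + 1) (Function.update x i true)|

/-- `f` is almost balanced: `|Pr_x[f(x)=0] - Pr_x[f(x)=1]| ≤ 1/3` over
uniformly random `x ∈ {0,1}^n`. -/
def AlmostBalanced {n : ℕ} (f : (Fin n → Bool) → Bool) : Prop :=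
  |((Finset.univ.filter fun x : Fin n → Bool => f x = false).card : ℝ) / 2 ^ n -
    ((Finset.univ.filter fun x : Fin n → Bool => f x = true).card : ℝ) / 2 ^ n| ≤ 1 / 3

open Classical in
/-- The pivotal index `i(x)`: the least `i` with `Δ_i(x_1…x_{i-1}) ≥ 2/(3n)`
(junk value if none exists). -/
noncomputable def pivot {n : ℕ} (hn : 0 < n) (f : (Fin n → Bool) → Bool)
    (x : Fin n → Bool) : Fin n :=
  if h : ∃ i : Fin n, Del f i x ≥ 2 / (3 * n) then
    Fin.find (fun i : Fin n => Del f i x ≥ 2 / (3 * n)) h else ⟨0, hn⟩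

/-- The bias direction `σ(x)`: `0` if `π⁰(x_1…x_{i(x)-1}0) > π⁰(x_1…x_{i(x)-1}1)`
and `1` otherwise. -/
noncomputable def sig {n : ℕ} (hn : 0 < n) (f : (Fin n → Bool) → Bool)
    (x : Fin n → Bool) : Bool :=
  if piz f ((pivot hn f x : ℕ) + 1) (Function.update x (pivot hn f x) false) >
      piz f ((pivot hn f x : ℕ) + 1) (Function.update x (pivot hn f x) true)
  then false else true


/-- An allowed input string: componentwise allowed input pairs `(u_j, v_j) ∈ G_N`. -/
def AllowedStr (N : ℕ) {n : ℕ} (u v : Fin n → ℕ) : Prop :=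
  ∀ j : Fin n, Allowed N (u j) (v j)

/-- The `n`-fold product quantum system
`P(x,y|u,v) = ∏_j Q(x_j,y_j|u_j,v_j)`. -/
noncomputable def Pprod (N : ℕ) {n : ℕ} (x y : Fin n → Bool) (u v : Fin n → ℕ) : ℝ :=
  ∏ j : Fin n, Qbox N (x j) (y j) (u j) (v j)

/-- The biased `n`-box systems: `Pbias N hn f false = P⁰` biases the pivotal
subsystem of `x` in direction `σ(x)`, and `Pbias N hn f true = P¹` biases it
in direction `1 - σ(x)`; all the non-pivotal subsystems are the unbiased `Q`. -/
noncomputable def Pbias (N : ℕ) {n : ℕ} (hn : 0 < n) (f : (Fin n → Bool) → Bool)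
    (flip : Bool) (x y : Fin n → Bool) (u v : Fin n → ℕ) : ℝ :=
  Qbias N (xor (sig hn f x) flip) (x (pivot hn f x)) (y (pivot hn f x))
      (u (pivot hn f x)) (v (pivot hn f x)) *
    ∏ j ∈ Finset.univ.erase (pivot hn f x), Qbox N (x j) (y j) (u j) (v j)




-- ===== auxiliary lemmas =====


lemma Qbox_sum (N : ℕ) (y : Bool) (u v : ℕ) :
    Qbox N false y u v + Qbox N true y u v = 1 / 2 := by
  have h := Real.sin_sq_add_cos_sq (Real.pi / (4 * N))
  cases y <;> simp [Qbox] <;> split_ifs <;>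
    simp only [s2, c2] <;> linarith

lemma Qbias_sum (N : ℕ) (σ : Bool) (y : Bool) (u v : ℕ) :
    Qbias N σ false y u v + Qbias N σ true y u v = 1 / 2 := by
  have h := Qbox_sum N y u v
  cases σ <;> simp [Qbias] <;> linarith

lemma piz_congr {n : ℕ} (f : (Fin n → Bool) → Bool) (k : ℕ) {x x' : Fin n → Bool}
    (h : ∀ j : Fin n, (j : ℕ) < k → x j = x' j) : piz f k x = piz f k x' := by
  unfold piz
  congr 3
  apply Finset.filter_congr
  intro z _
  constructor
  · rintro ⟨h1, h2⟩
    exact ⟨fun j hj => (h1 j hj).trans (h j hj), h2⟩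
  · rintro ⟨h1, h2⟩
    exact ⟨fun j hj => (h1 j hj).trans (h j hj).symm, h2⟩

lemma del_congr {n : ℕ} (f : (Fin n → Bool) → Bool) (i : Fin n) {x x' : Fin n → Bool}
    (h : ∀ j : Fin n, (j : ℕ) < (i : ℕ) → x j = x' j) : Del f i x = Del f i x' := by
  unfold Del
  have hb : ∀ b : Bool, piz f ((i : ℕ) + 1) (Function.update x i b)
      = piz f ((i : ℕ) + 1) (Function.update x' i b) := by
    intro b
    apply piz_congr
    intro j hj
    rcases eq_or_ne j i with rfl | hne
    · simp
    · rw [Function.update_of_ne hne, Function.update_of_ne hne]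
      exact h j (lt_of_le_of_ne (Nat.lt_succ_iff.mp hj) (fun hc => hne (Fin.ext hc)))
  rw [hb false, hb true]

lemma piz_split {n : ℕ} (f : (Fin n → Bool) → Bool) (k : ℕ) (hk : k < n)
    (x : Fin n → Bool) :
    piz f k x = (piz f (k + 1) (Function.update x ⟨k, hk⟩ false) +
      piz f (k + 1) (Function.update x ⟨k, hk⟩ true)) / 2 := by
  classical
  set i : Fin n := ⟨k, hk⟩ with hi
  have hset : ∀ b : Bool,
      (Finset.univ.filter fun z : Fin n → Bool =>
        (∀ j : Fin n, (j : ℕ) < k + 1 → z j = Function.update x i b j) ∧ f z = false)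
      = (Finset.univ.filter fun z : Fin n → Bool =>
          (∀ j : Fin n, (j : ℕ) < k → z j = x j) ∧ f z = false).filter
          (fun z => z i = b) := by
    intro b
    ext z
    simp only [Finset.mem_filter, Finset.mem_univ, true_and]
    constructor
    · rintro ⟨h1, h2⟩
      refine ⟨⟨fun j hj => ?_, h2⟩, ?_⟩
      · have hne : j ≠ i := fun hc => by simp [hc, hi] at hj
        have := h1 j (Nat.lt_succ_of_lt hj)
        rwa [Function.update_of_ne hne] at this
      · have := h1 i (by simp [hi])
        rwa [Function.update_self] at this
    · rintro ⟨⟨h1, h2⟩, h3⟩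
      refine ⟨fun j hj => ?_, h2⟩
      rcases eq_or_ne j i with rfl | hne
      · rw [Function.update_self]; exact h3
      · rw [Function.update_of_ne hne]
        apply h1
        have : (j : ℕ) ≠ k := fun hc => hne (Fin.ext (by simp [hi, hc]))
        omega
  have hcard :
      ((Finset.univ.filter fun z : Fin n → Bool =>
        (∀ j : Fin n, (j : ℕ) < k → z j = x j) ∧ f z = false).card : ℝ)
      = ((Finset.univ.filter fun z : Fin n → Bool =>
          (∀ j : Fin n, (j : ℕ) < k + 1 → z j = Function.update x i false j) ∧ f z = false).card : ℝ)
        + ((Finset.univ.filter fun z : Fin n → Bool =>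
          (∀ j : Fin n, (j : ℕ) < k + 1 → z j = Function.update x i true j) ∧ f z = false).card : ℝ) := by
    rw [hset false, hset true]
    set A := (Finset.univ.filter fun z : Fin n → Bool =>
        (∀ j : Fin n, (j : ℕ) < k → z j = x j) ∧ f z = false)
    have := Finset.card_filter_add_card_filter_not
      (s := A) (p := fun z => z i = false)
    push_cast [← this]
    have : A.filter (fun z => ¬ z i = false) = A.filter (fun z => z i = true) := by
      apply Finset.filter_congr; intro z _; simp
    rw [this]
  unfold piz
  rw [hcard]
  have hpow : (2 : ℝ) ^ (n - k) = 2 ^ (n - (k + 1)) * 2 := by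
    rw [← pow_succ]
    congr 1
    omega
  rw [hpow]
  have h2 : (2 : ℝ) ^ (n - (k + 1)) ≠ 0 := by positivity
  field_simp

lemma piz_zero {n : ℕ} (f : (Fin n → Bool) → Bool) (x : Fin n → Bool) :
    piz f 0 x = ((Finset.univ.filter fun z : Fin n → Bool => f z = false).card : ℝ) / 2 ^ n := by
  unfold piz
  congr 3
  apply Finset.filter_congr
  intro z _
  simp

lemma piz_top {n : ℕ} (f : (Fin n → Bool) → Bool) (x : Fin n → Bool) :
    piz f n x = if f x = false then 1 else 0 := by
  classical
  unfold piz
  have hset : (Finset.univ.filter fun z : Fin n → Bool =>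
      (∀ j : Fin n, (j : ℕ) < n → z j = x j) ∧ f z = false)
      = if f x = false then {x} else ∅ := by
    ext z
    simp only [Finset.mem_filter, Finset.mem_univ, true_and]
    split_ifs with hfx
    · simp only [Finset.mem_singleton]
      constructor
      · rintro ⟨h1, _⟩; exact funext fun j => h1 j j.isLt
      · rintro rfl; exact ⟨fun _ _ => rfl, hfx⟩
    · simp only [Finset.notMem_empty, iff_false]
      rintro ⟨h1, h2⟩
      have : z = x := funext fun j => h1 j j.isLt
      exact hfx (this ▸ h2)
  rw [hset]
  split_ifs <;> simp

lemma exists_pivot {n : ℕ} (hn : 0 < n) (f : (Fin n → Bool) → Bool)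
    (hf : AlmostBalanced f) (x : Fin n → Bool) :
    ∃ i : Fin n, Del f i x ≥ 2 / (3 * n) := by
  by_contra hcon
  push_neg at hcon
  set a : ℕ → ℝ := fun k => piz f k x with ha
  -- each step is small
  have hstep : ∀ k, k < n → |a (k + 1) - a k| < 1 / (3 * n) := by
    intro k hk
    set i : Fin n := ⟨k, hk⟩ with hi
    have hsplit := piz_split f k hk x
    rw [← hi] at hsplit
    set p := piz f (k + 1) (Function.update x i false) with hp
    set q := piz f (k + 1) (Function.update x i true) with hq
    have hDel : Del f i x = |p - q| := rfl
    have hak : a k = (p + q) / 2 := hsplit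
    have hak1 : a (k + 1) = p ∨ a (k + 1) = q := by
      rcases Bool.eq_false_or_eq_true (x i) with hb | hb
      · right
        have hux : Function.update x i true = x := by
          rw [← hb]; exact Function.update_eq_self i x
        rw [hq, hux]
      · left
        have hux : Function.update x i false = x := by
          rw [← hb]; exact Function.update_eq_self i x
        rw [hp, hux]
    have habs : |a (k + 1) - a k| = |p - q| / 2 := by
      rcases hak1 with h | h <;> rw [h, hak]
      · rw [show p - (p + q) / 2 = (p - q) / 2 by ring, abs_div]
        norm_num
      · rw [show q - (p + q) / 2 = -((p - q) / 2) by ring, abs_neg, abs_div]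
        norm_num
    have hcon' := hcon i
    rw [hDel] at hcon'
    rw [habs]
    have hn' : (0:ℝ) < n := by exact_mod_cast hn
    calc |p - q| / 2 < (2 / (3 * n)) / 2 := by linarith
      _ = 1 / (3 * n) := by ring
  -- telescoping
  have htele : a n - a 0 = ∑ k ∈ Finset.range n, (a (k + 1) - a k) :=
    (Finset.sum_range_sub a n).symm
  have hsum : |a n - a 0| < 1 / 3 := by
    calc |a n - a 0| = |∑ k ∈ Finset.range n, (a (k + 1) - a k)| := by rw [htele]
      _ ≤ ∑ k ∈ Finset.range n, |a (k + 1) - a k| := Finset.abs_sum_le_sum_abs _ _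
      _ < ∑ k ∈ Finset.range n, 1 / (3 * (n:ℝ)) := by
          apply Finset.sum_lt_sum_of_nonempty
          · exact Finset.nonempty_range_iff.mpr hn.ne'
          · intro k hk
            exact hstep k (Finset.mem_range.mp hk)
      _ = 1 / 3 := by
          rw [Finset.sum_const, Finset.card_range, nsmul_eq_mul]
          have hn' : (n:ℝ) ≠ 0 := by positivity
          field_simp
  -- endpoints
  have hend : |a n - 1 / 2| = 1 / 2 := by
    have hn2 := piz_top f x
    have han : a n = if f x = false then 1 else 0 := hn2
    rw [han]
    split_ifs
    · rw [abs_of_nonneg (by norm_num)]; norm_num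
    · rw [abs_of_nonpos (by norm_num)]; norm_num
  have hbal : |a 0 - 1 / 2| ≤ 1 / 6 := by
    have h0 := piz_zero f x
    have hcards : ((Finset.univ.filter fun z : Fin n → Bool => f z = false).card : ℝ)
        + ((Finset.univ.filter fun z : Fin n → Bool => f z = true).card : ℝ) = 2 ^ n := by
      have hc := Finset.card_filter_add_card_filter_not
        (s := (Finset.univ : Finset (Fin n → Bool))) (p := fun z => f z = false)
      have hneg : (Finset.univ.filter fun z : Fin n → Bool => ¬ f z = false)
          = Finset.univ.filter fun z : Fin n → Bool => f z = true := by
        apply Finset.filter_congr; intro z _; simp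
      rw [hneg] at hc
      have hcardu : (Finset.univ : Finset (Fin n → Bool)).card = 2 ^ n := by
        simp [Fintype.card_fun]
      rw [hcardu] at hc
      exact_mod_cast hc
    unfold AlmostBalanced at hf
    have hpow : (0:ℝ) < 2 ^ n := by positivity
    have ha0 : a 0 = ((Finset.univ.filter fun z : Fin n → Bool => f z = false).card : ℝ) / 2 ^ n := h0
    have htrue : ((Finset.univ.filter fun z : Fin n → Bool => f z = true).card : ℝ) / 2 ^ n
        = 1 - a 0 := by
      rw [ha0]
      field_simp
      linarith
    rw [htrue, ← ha0] at hf
    rw [abs_le] at hf ⊢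
    constructor <;> linarith [hf.1, hf.2]
  have habs2 : (1:ℝ) / 2 ≤ |a n - a 0| + |a 0 - 1 / 2| := by
    calc (1:ℝ) / 2 = |a n - 1/2| := hend.symm
      _ ≤ |a n - a 0| + |a 0 - 1/2| := abs_sub_le _ _ _
  linarith



/-- `i` is the pivotal index of `x`. -/
def isPiv {n : ℕ} (f : (Fin n → Bool) → Bool) (i : Fin n) (x : Fin n → Bool) : Prop :=
  Del f i x ≥ 2 / (3 * n) ∧ ∀ q : Fin n, q < i → ¬ (Del f q x ≥ 2 / (3 * n))

/-- The bias direction at a candidate pivotal index `i`. -/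
noncomputable def sigv {n : ℕ} (f : (Fin n → Bool) → Bool) (i : Fin n)
    (x : Fin n → Bool) : Bool :=
  if piz f ((i : ℕ) + 1) (Function.update x i false) >
      piz f ((i : ℕ) + 1) (Function.update x i true)
  then false else true

open Classical in
/-- The `j`-th factor of the biased system as a function of the full output string. -/
noncomputable def hfun (N : ℕ) {n : ℕ} (f : (Fin n → Bool) → Bool)
    (y : Fin n → Bool) (u v : Fin n → ℕ) (j : Fin n) (x : Fin n → Bool) : ℝ :=
  if isPiv f j x then Qbias N (sigv f j x) (x j) (y j) (u j) (v j)
  else Qbox N (x j) (y j) (u j) (v j)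

lemma pivot_unique {n : ℕ} (hn : 0 < n) (f : (Fin n → Bool) → Bool)
    (x : Fin n → Bool) (i : Fin n) (h : isPiv f i x) : pivot hn f x = i := by
  classical
  have hex : ∃ i : Fin n, Del f i x ≥ 2 / (3 * n) := ⟨i, h.1⟩
  unfold pivot
  rw [dif_pos hex, Fin.find_eq_iff]
  exact ⟨h.1, fun j hj => h.2 j hj⟩

lemma pivot_spec {n : ℕ} (hn : 0 < n) (f : (Fin n → Bool) → Bool)
    (hf : AlmostBalanced f) (x : Fin n → Bool) : isPiv f (pivot hn f x) x := by
  classical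
  obtain ⟨i0, hi0⟩ := exists_pivot hn f hf x
  have hex : ∃ i : Fin n, Del f i x ≥ 2 / (3 * n) := ⟨i0, hi0⟩
  unfold pivot
  rw [dif_pos hex]
  exact ⟨Fin.find_spec hex, fun q hq => Fin.find_min hex hq⟩

lemma sig_eq_sigv {n : ℕ} (hn : 0 < n) (f : (Fin n → Bool) → Bool)
    (x : Fin n → Bool) : sig hn f x = sigv f (pivot hn f x) x := rfl

/-- `Pbias … false` is the product of the `hfun` factors. -/
lemma Pbias_eq_prod (N : ℕ) {n : ℕ} (hn : 0 < n) (f : (Fin n → Bool) → Bool)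
    (hf : AlmostBalanced f) (x y : Fin n → Bool) (u v : Fin n → ℕ) :
    Pbias N hn f false x y u v = ∏ j : Fin n, hfun N f y u v j x := by
  classical
  have hp : isPiv f (pivot hn f x) x := pivot_spec hn f hf x
  rw [← Finset.mul_prod_erase Finset.univ _ (Finset.mem_univ (pivot hn f x))]
  unfold Pbias
  congr 1
  · rw [hfun, if_pos hp, ← sig_eq_sigv hn f x]
    simp
  · apply Finset.prod_congr rfl
    intro j hj
    have hjne : j ≠ pivot hn f x := (Finset.mem_erase.mp hj).1
    rw [hfun, if_neg]
    intro hc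
    exact hjne ((pivot_unique hn f x j hc) ▸ (pivot_unique hn f x j hc).symm ▸ rfl)

lemma isPiv_congr {n : ℕ} (f : (Fin n → Bool) → Bool) (i : Fin n)
    {x x' : Fin n → Bool} (h : ∀ k : Fin n, (k : ℕ) < (i : ℕ) → x k = x' k)
    (hxi : Del f i x = Del f i x') :
    isPiv f i x ↔ isPiv f i x' := by
  unfold isPiv
  rw [hxi]
  constructor <;> rintro ⟨h1, h2⟩ <;> refine ⟨h1, fun q hq => ?_⟩ <;>
    have hD : Del f q x = Del f q x' :=
      del_congr f q (fun k hk => h k (lt_trans hk hq))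
  · rw [← hD]; exact h2 q hq
  · rw [hD]; exact h2 q hq

lemma sigv_congr {n : ℕ} (f : (Fin n → Bool) → Bool) (i : Fin n)
    {x x' : Fin n → Bool} (h : ∀ k : Fin n, (k : ℕ) < (i : ℕ) → x k = x' k) :
    sigv f i x = sigv f i x' := by
  unfold sigv
  have hb : ∀ b : Bool, piz f ((i : ℕ) + 1) (Function.update x i b)
      = piz f ((i : ℕ) + 1) (Function.update x' i b) := by
    intro b
    apply piz_congr
    intro k hk
    rcases eq_or_ne k i with rfl | hne
    · simp
    · rw [Function.update_of_ne hne, Function.update_of_ne hne]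
      exact h k (lt_of_le_of_ne (Nat.lt_succ_iff.mp hk)
        (fun hc => hne (Fin.ext hc)))
  rw [hb false, hb true]

lemma hfun_congr (N : ℕ) {n : ℕ} (f : (Fin n → Bool) → Bool)
    (y : Fin n → Bool) (u v : Fin n → ℕ) (j : Fin n) {x x' : Fin n → Bool}
    (h : ∀ k : Fin n, (k : ℕ) ≤ (j : ℕ) → x k = x' k) :
    hfun N f y u v j x = hfun N f y u v j x' := by
  have hlt : ∀ k : Fin n, (k : ℕ) < (j : ℕ) → x k = x' k :=
    fun k hk => h k (le_of_lt hk)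
  have hD : Del f j x = Del f j x' := del_congr f j hlt
  have hP := isPiv_congr f j hlt hD
  have hS := sigv_congr f j hlt
  have hxj : x j = x' j := h j le_rfl
  unfold hfun
  rw [hS, hxj]
  by_cases hp : isPiv f j x'
  · rw [if_pos (hP.mpr hp), if_pos hp]
  · rw [if_neg (fun hc => hp (hP.mp hc)), if_neg hp]

lemma hfun_sum_update (N : ℕ) {n : ℕ} (f : (Fin n → Bool) → Bool)
    (y : Fin n → Bool) (u v : Fin n → ℕ) (i : Fin n) (x : Fin n → Bool) :
    hfun N f y u v i (Function.update x i false) +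
      hfun N f y u v i (Function.update x i true) = 1 / 2 := by
  have hagree : ∀ b : Bool, ∀ k : Fin n, (k : ℕ) < (i : ℕ) →
      Function.update x i b k = x k := by
    intro b k hk
    exact Function.update_of_ne (fun hc => by rw [hc] at hk; omega) _ _
  have hDel : ∀ b : Bool, Del f i (Function.update x i b) = Del f i x := by
    intro b
    exact del_congr f i (hagree b)
  have hPiv : ∀ b : Bool, (isPiv f i (Function.update x i b) ↔ isPiv f i x) := by
    intro b
    exact isPiv_congr f i (hagree b) (hDel b)
  have hSig : ∀ b : Bool, sigv f i (Function.update x i b) = sigv f i x := by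
    intro b
    unfold sigv
    have hbb : ∀ c : Bool,
        Function.update (Function.update x i b) i c = Function.update x i c := by
      intro c
      simp [Function.update_idem]
    rw [hbb false, hbb true]
  unfold hfun
  rw [hSig false, hSig true, Function.update_self, Function.update_self]
  by_cases hp : isPiv f i x
  · rw [if_pos ((hPiv false).mpr hp), if_pos ((hPiv true).mpr hp)]
    exact Qbias_sum N _ (y i) (u i) (v i)
  · rw [if_neg (fun hc => hp ((hPiv false).mp hc)),
      if_neg (fun hc => hp ((hPiv true).mp hc))]
    exact Qbox_sum N (y i) (u i) (v i)

lemma sum_hfun (N : ℕ) {n : ℕ} (hn : 0 < n) (f : (Fin n → Bool) → Bool)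
    (hf : AlmostBalanced f) (y : Fin n → Bool) (u v : Fin n → ℕ) :
    ∀ d m : ℕ, m + d = n → ∀ x : Fin n → Bool,
    ∑ t ∈ Finset.univ.filter (fun t : Fin n → Bool => ∀ j : Fin n, (j:ℕ) < m → t j = x j),
        ∏ j : Fin n, hfun N f y u v j t
      = (1/2) ^ d * ∏ j ∈ Finset.univ.filter (fun j : Fin n => (j:ℕ) < m),
          hfun N f y u v j x := by
  classical
  intro d
  induction d with
  | zero =>
    intro m hm x
    have hmn : m = n := by omega
    have hset : Finset.univ.filter
        (fun t : Fin n → Bool => ∀ j : Fin n, (j:ℕ) < m → t j = x j) = {x} := by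
      ext t
      simp only [Finset.mem_filter, Finset.mem_univ, true_and, Finset.mem_singleton]
      constructor
      · intro h; exact funext fun j => h j (by have := j.isLt; omega)
      · rintro rfl; exact fun _ _ => rfl
    rw [hset, Finset.sum_singleton, pow_zero, one_mul,
      Finset.filter_true_of_mem (fun j _ => by have := j.isLt; omega)]
  | succ d ih =>
    intro m hm x
    have hmlt : m < n := by omega
    set i : Fin n := ⟨m, hmlt⟩ with hi
    set A := Finset.univ.filter
      (fun t : Fin n → Bool => ∀ j : Fin n, (j:ℕ) < m → t j = x j) with hA
    have hsplit : ∑ t ∈ A, ∏ j : Fin n, hfun N f y u v j t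
        = ∑ t ∈ A.filter (fun t => t i = false), ∏ j, hfun N f y u v j t
          + ∑ t ∈ A.filter (fun t => ¬ t i = false), ∏ j, hfun N f y u v j t :=
      (Finset.sum_filter_add_sum_filter_not A _ _).symm
    have hAb : ∀ b : Bool, A.filter (fun t => t i = b)
        = Finset.univ.filter (fun t : Fin n → Bool =>
            ∀ j : Fin n, (j:ℕ) < m + 1 → t j = Function.update x i b j) := by
      intro b
      rw [hA, Finset.filter_filter]
      ext t
      simp only [Finset.mem_filter, Finset.mem_univ, true_and]
      constructor
      · rintro ⟨h1, h2⟩ j hj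
        rcases eq_or_ne j i with rfl | hne
        · rw [Function.update_self]; exact h2
        · rw [Function.update_of_ne hne]
          apply h1
          have hjm : (j:ℕ) ≠ m := fun hc => hne (Fin.ext (by simp [hc, hi]))
          omega
      · intro h
        constructor
        · intro j hj
          have hne : j ≠ i := fun hc => absurd hj (by rw [hc]; simp [hi])
          have := h j (by omega)
          rwa [Function.update_of_ne hne] at this
        · have := h i (by simp [hi])
          rwa [Function.update_self] at this
    have hnotf : A.filter (fun t => ¬ t i = false) = A.filter (fun t => t i = true) := by
      apply Finset.filter_congr; intro t _; simp
    have hfilter : Finset.univ.filter (fun j : Fin n => (j:ℕ) < m + 1)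
        = insert i (Finset.univ.filter (fun j : Fin n => (j:ℕ) < m)) := by
      ext j
      simp only [Finset.mem_filter, Finset.mem_univ, true_and, Finset.mem_insert]
      constructor
      · intro hj
        rcases Nat.lt_or_ge (j:ℕ) m with h | h
        · exact Or.inr h
        · left; apply Fin.ext; simp [hi]; omega
      · rintro (rfl | hj)
        · simp [hi]
        · omega
    have hinot : i ∉ Finset.univ.filter (fun j : Fin n => (j:ℕ) < m) := by
      simp [hi]
    have hIH : ∀ b : Bool,
        ∑ t ∈ A.filter (fun t => t i = b), ∏ j, hfun N f y u v j t
        = (1/2:ℝ)^d * (hfun N f y u v i (Function.update x i b)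
            * ∏ j ∈ Finset.univ.filter (fun j : Fin n => (j:ℕ) < m),
                hfun N f y u v j x) := by
      intro b
      rw [hAb b, ih (m+1) (by omega) (Function.update x i b), hfilter,
        Finset.prod_insert hinot]
      congr 1
      congr 1
      apply Finset.prod_congr rfl
      intro j hj
      have hjm : (j:ℕ) < m := (Finset.mem_filter.mp hj).2
      apply hfun_congr
      intro k hk
      apply Function.update_of_ne
      intro hc
      rw [hc] at hk
      simp [hi] at hk
      omega
    rw [hsplit, hnotf, hIH false, hIH true]
    have hsum2 := hfun_sum_update N f y u v i x
    set P := ∏ j ∈ Finset.univ.filter (fun j : Fin n => (j:ℕ) < m),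
      hfun N f y u v j x
    set hf0 := hfun N f y u v i (Function.update x i false)
    set hf1 := hfun N f y u v i (Function.update x i true)
    calc (1/2:ℝ)^d * (hf0 * P) + (1/2)^d * (hf1 * P)
        = (1/2)^d * (hf0 + hf1) * P := by ring
      _ = (1/2)^(d+1) * P := by rw [hsum2]; ring


/-- For `N ≥ 1`, `n ≥ 1` and an almost balanced `f`, the biased system `P⁰`
is time-ordered non-signalling on Alice's side: changing Alice's inputs from
coordinate `i` on does not affect the joint distribution of Bob's outputs and
Alice's outputs before `i`. -/
theorem biased_system_time_ordered_non_signalling_alice (N n : ℕ) (hN : 1 ≤ N)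
    (hn : 0 < n) (f : (Fin n → Bool) → Bool) (hf : AlmostBalanced f) :
    ∀ i : Fin n, ∀ u u' v : Fin n → ℕ, AllowedStr N u v → AllowedStr N u' v →
      (∀ j : Fin n, j < i → u j = u' j) → ∀ y x : Fin n → Bool,
      ∑ t ∈ Finset.univ.filter (fun t : Fin n → Bool => ∀ j : Fin n, j < i → t j = x j),
          Pbias N hn f false t y u v =
        ∑ t ∈ Finset.univ.filter (fun t : Fin n → Bool => ∀ j : Fin n, j < i → t j = x j),
          Pbias N hn f false t y u' v := by
  classical
  intro i u u' v _ _ huu' y x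
  simp only [Fin.lt_def]
  rw [Finset.sum_congr rfl (fun t _ => Pbias_eq_prod N hn f hf t y u v),
    Finset.sum_congr rfl (fun t _ => Pbias_eq_prod N hn f hf t y u' v),
    sum_hfun N hn f hf y u v (n - (i:ℕ)) (i:ℕ) (by omega) x,
    sum_hfun N hn f hf y u' v (n - (i:ℕ)) (i:ℕ) (by omega) x]
  congr 1
  apply Finset.prod_congr rfl
  intro j hj
  have hji : (j:ℕ) < (i:ℕ) := (Finset.mem_filter.mp hj).2
  have huj : u j = u' j := huu' j hji
  simp only [hfun, huj]
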